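/- Fix integers k₁, k₂ ≥ 2. There exists a constant C > 0 (depending only on k₁ and k₂) such that for every odd prime ℓ, | |𝒞_ℓ| − ℓ⁶/λ₁ | ≤ C·ℓ⁵. -/

import Mathlib

open Finset

section Aux

variable {K : Type*} [Field K] [Fintype K] [DecidableEq K]

lemma count_mul_eq (m : K) :
    (univ.filter fun bc : K × K => bc.1 * bc.2 = m).card =
      if m = 0 then 2 * Fintype.card K - 1 else Fintype.card K - 1 := by
  classical
  rw [Finset.card_filter, Fintype.sum_prod_type]
  have h1 : ∀ b : K, (∑ c : K, if b * c = m then (1:ℕ) else 0) =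
      if b = 0 then (if m = 0 then Fintype.card K else 0) else 1 := by
    intro b
    by_cases hb : b = 0
    · subst hb
      simp only [zero_mul, if_pos rfl]
      by_cases hm : m = 0
      · simp [hm, eq_comm]
      · simp [hm, Ne.symm hm, eq_comm]
    · rw [if_neg hb]
      have key : ∀ c : K, (b * c = m) ↔ c = b⁻¹ * m := fun c =>
        ⟨fun h => by rw [← h, inv_mul_cancel_left₀ hb],
         fun h => by rw [h, mul_inv_cancel_left₀ hb]⟩
      simp only [key]
      simp
  simp only [h1]
  rw [Finset.sum_eq_add_sum_sdiff_singleton_of_mem (mem_univ (0:K))]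
  rw [if_pos rfl]
  have h2 : ∑ x ∈ univ \ {(0:K)}, (if x = 0 then (if m = 0 then Fintype.card K else 0) else 1)
      = Fintype.card K - 1 := by
    rw [Finset.sum_congr rfl (g := fun _ => 1) (fun x hx => by
      simp only [mem_sdiff, mem_singleton] at hx
      rw [if_neg hx.2]), Finset.sum_const, smul_eq_mul, mul_one,
      Finset.card_sdiff_of_subset (by simp), Finset.card_univ, Finset.card_singleton]
  rw [h2]
  by_cases hm : m = 0
  · rw [if_pos hm, if_pos hm]
    have : 1 ≤ Fintype.card K := Fintype.card_pos
    omega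
  · rw [if_neg hm, if_neg hm, zero_add]

lemma roots_card_le (t d : K) :
    (univ.filter fun a : K => a * (t - a) - d = 0).card ≤ 2 := by
  classical
  set p : Polynomial K := Polynomial.C (-1 : K) * Polynomial.X ^ 2 + Polynomial.C t * Polynomial.X
      + Polynomial.C (-d) with hp
  have hc2 : p.coeff 2 = -1 := by
    simp [hp, Polynomial.coeff_add, Polynomial.coeff_C_mul, Polynomial.coeff_X_pow,
      Polynomial.coeff_C]
  have hpne : p ≠ 0 := fun h => by simp [h] at hc2
  have hdeg : p.natDegree = 2 := Polynomial.natDegree_quadratic (by norm_num)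
  have hsub : (univ.filter fun a : K => a * (t - a) - d = 0) ⊆ p.roots.toFinset := by
    intro a ha
    rw [Finset.mem_filter] at ha
    rw [Multiset.mem_toFinset, Polynomial.mem_roots hpne]
    show p.eval a = 0
    have : p.eval a = a * (t - a) - d := by simp [hp]; ring
    rw [this]; exact ha.2
  calc (univ.filter fun a : K => a * (t - a) - d = 0).card
      ≤ p.roots.toFinset.card := Finset.card_le_card hsub
    _ ≤ Multiset.card p.roots := Multiset.toFinset_card_le _
    _ ≤ p.natDegree := Polynomial.card_roots' p
    _ = 2 := hdeg

/-- Matrices with given trace and determinant, parametrized. -/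
def matEquiv (t d : K) :
    {M : Matrix (Fin 2) (Fin 2) K // M.trace = t ∧ M.det = d} ≃
      (Σ _a : K, {bc : K × K // bc.1 * bc.2 = _a * (t - _a) - d}) where
  toFun M := ⟨M.1 0 0, ⟨(M.1 0 1, M.1 1 0), by
    obtain ⟨M, hM1, hM2⟩ := M
    rw [Matrix.trace_fin_two] at hM1
    rw [Matrix.det_fin_two] at hM2
    have h11 : M 1 1 = t - M 0 0 := by linear_combination hM1
    rw [← h11]
    linear_combination -hM2⟩⟩
  invFun x := ⟨!![x.1, x.2.1.1; x.2.1.2, t - x.1], by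
    constructor
    · rw [Matrix.trace_fin_two]; simp
    · rw [Matrix.det_fin_two]; simp
      linear_combination -x.2.2⟩
  left_inv M := by
    obtain ⟨M, hM1, hM2⟩ := M
    rw [Matrix.trace_fin_two] at hM1
    ext i j
    fin_cases i <;> fin_cases j <;> simp
    linear_combination -hM1
  right_inv x := by
    obtain ⟨a, ⟨⟨b, c⟩, h⟩⟩ := x
    simp

lemma count_mat (t d : K) :
    ∃ Z : ℕ, Z ≤ 2 ∧
      Fintype.card {M : Matrix (Fin 2) (Fin 2) K // M.trace = t ∧ M.det = d} =
        Fintype.card K * (Fintype.card K - 1) + Z * Fintype.card K := by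
  classical
  set q := Fintype.card K with hq
  have hq1 : 1 ≤ q := Fintype.card_pos
  refine ⟨(univ.filter fun a : K => a * (t - a) - d = 0).card, roots_card_le t d, ?_⟩
  rw [Fintype.card_congr (matEquiv t d), Fintype.card_sigma]
  have key : ∀ a : K, Fintype.card {bc : K × K // bc.1 * bc.2 = a * (t - a) - d} =
      (q - 1) + (if a * (t - a) - d = 0 then q else 0) := by
    intro a
    rw [Fintype.card_subtype, count_mul_eq]
    by_cases h : a * (t - a) - d = 0 <;> simp [h] <;> omega
  simp only [key]
  rw [Finset.sum_add_distrib, Finset.sum_const, Finset.sum_ite, Finset.sum_const,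
    Finset.sum_const]
  simp [mul_comm, hq]

def glEquiv (t d : K) (hd : d ≠ 0) :
    {g : Matrix.GeneralLinearGroup (Fin 2) K //
        Matrix.trace (g : Matrix (Fin 2) (Fin 2) K) = t ∧
        Matrix.det (g : Matrix (Fin 2) (Fin 2) K) = d} ≃
      {M : Matrix (Fin 2) (Fin 2) K // M.trace = t ∧ M.det = d} where
  toFun g := ⟨g.1, g.2⟩
  invFun M := ⟨Matrix.GeneralLinearGroup.mkOfDetNeZero M.1 (by rw [M.2.2]; exact hd), M.2⟩
  left_inv g := by
    apply Subtype.ext; apply Units.ext; rfl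
  right_inv M := rfl

lemma count_gl (t d : K) (hd : d ≠ 0) :
    ∃ Z : ℕ, Z ≤ 2 ∧
      Fintype.card {g : Matrix.GeneralLinearGroup (Fin 2) K //
          Matrix.trace (g : Matrix (Fin 2) (Fin 2) K) = t ∧
          Matrix.det (g : Matrix (Fin 2) (Fin 2) K) = d} =
        Fintype.card K * (Fintype.card K - 1) + Z * Fintype.card K := by
  rw [Fintype.card_congr (glEquiv t d hd)]
  exact count_mat t d

lemma count_gl_bounds (t d : K) (hd : d ≠ 0) :
    Fintype.card K * (Fintype.card K - 1) ≤
      Fintype.card {g : Matrix.GeneralLinearGroup (Fin 2) K //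
          Matrix.trace (g : Matrix (Fin 2) (Fin 2) K) = t ∧
          Matrix.det (g : Matrix (Fin 2) (Fin 2) K) = d} ∧
      Fintype.card {g : Matrix.GeneralLinearGroup (Fin 2) K //
          Matrix.trace (g : Matrix (Fin 2) (Fin 2) K) = t ∧
          Matrix.det (g : Matrix (Fin 2) (Fin 2) K) = d} ≤
        Fintype.card K * (Fintype.card K - 1) + 2 * Fintype.card K := by
  obtain ⟨Z, hZ, hcard⟩ := count_gl t d hd
  rw [hcard]
  constructor
  · exact Nat.le_add_right _ _
  · exact Nat.add_le_add_left (Nat.mul_le_mul_right _ hZ) _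

lemma card_pow_eq_one_units (a b : ℕ) (ha : 1 ≤ a) :
    Nat.card (((powMonoidHom a : Kˣ →* Kˣ).prod (powMonoidHom b)).ker) =
      Nat.gcd (Fintype.card Kˣ) (Nat.gcd a b) := by
  classical
  set n := Fintype.card Kˣ with hn
  set lam := Nat.gcd n (Nat.gcd a b) with hlam
  have hab : 0 < Nat.gcd a b := Nat.gcd_pos_of_pos_left _ ha
  have hnpos : 0 < n := Fintype.card_pos
  have hlampos : 0 < lam := Nat.gcd_pos_of_pos_left _ hnpos
  have hker : ((powMonoidHom a : Kˣ →* Kˣ).prod (powMonoidHom b)).ker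
      = rootsOfUnity lam K := by
    ext x
    rw [MonoidHom.mem_ker, mem_rootsOfUnity, Prod.ext_iff]
    simp only [MonoidHom.prod_apply, powMonoidHom_apply, Prod.fst_one, Prod.snd_one]
    constructor
    · rintro ⟨h1, h2⟩
      have d1 := orderOf_dvd_of_pow_eq_one h1
      have d2 := orderOf_dvd_of_pow_eq_one h2
      have d3 : orderOf x ∣ n := orderOf_dvd_card
      exact orderOf_dvd_iff_pow_eq_one.mp (Nat.dvd_gcd d3 (Nat.dvd_gcd d1 d2))
    · intro h
      have hd := orderOf_dvd_of_pow_eq_one h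
      constructor
      · exact orderOf_dvd_iff_pow_eq_one.mp
          (hd.trans ((Nat.gcd_dvd_right n _).trans (Nat.gcd_dvd_left a b)))
      · exact orderOf_dvd_iff_pow_eq_one.mp
          (hd.trans ((Nat.gcd_dvd_right n _).trans (Nat.gcd_dvd_right a b)))
  rw [hker]
  obtain ⟨ζ, hζ⟩ := IsCyclic.exists_generator (α := Kˣ)
  have hord : orderOf ζ = n :=
    (orderOf_eq_card_of_forall_mem_zpowers hζ).trans Nat.card_eq_fintype_card
  have hdvd : lam ∣ n := Nat.gcd_dvd_left _ _
  have hξ : orderOf (ζ ^ (n / lam)) = lam := by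
    rw [← hord] at hdvd ⊢
    exact orderOf_pow_orderOf_div (by rw [hord]; omega) hdvd
  have hprim : IsPrimitiveRoot (ζ ^ (n / lam)) lam := by
    have := IsPrimitiveRoot.orderOf (ζ ^ (n / lam))
    rwa [hξ] at this
  haveI : NeZero lam := ⟨hlampos.ne'⟩
  rw [hprim.card_rootsOfUnity']

lemma card_image_pow (a b : ℕ) (ha : 1 ≤ a) :
    (univ.image (fun v : Kˣ => (((v : K)) ^ a, ((v : K)) ^ b))).card *
      Nat.gcd (Fintype.card Kˣ) (Nat.gcd a b) = Fintype.card Kˣ := by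
  classical
  set ψ := ((powMonoidHom a : Kˣ →* Kˣ).prod (powMonoidHom b)) with hψ
  have hι : Function.Injective (fun p : Kˣ × Kˣ => ((p.1 : K), (p.2 : K))) := by
    intro p q h
    rw [Prod.ext_iff] at h ⊢
    exact ⟨Units.ext h.1, Units.ext h.2⟩
  have e1 : (fun v : Kˣ => (((v : K)) ^ a, ((v : K)) ^ b)) =
      (fun p : Kˣ × Kˣ => ((p.1 : K), (p.2 : K))) ∘ ⇑ψ := by
    funext v
    simp [hψ, Units.val_pow_eq_pow_val]
  rw [e1, ← Finset.image_image, Finset.card_image_of_injective _ hι]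
  have e2 : (univ.image ⇑ψ) = (Set.range ⇑ψ).toFinset := by
    rw [Set.toFinset_range]
  rw [e2, Set.toFinset_card]
  have e3 : Fintype.card (Set.range ⇑ψ) = Nat.card ψ.range := by
    rw [← Nat.card_eq_fintype_card]
    exact Nat.card_congr (Equiv.setCongr ψ.coe_range.symm)
  rw [e3, ← card_pow_eq_one_units (K := K) a b ha]
  have h1 : Nat.card Kˣ = Nat.card (Kˣ ⧸ ψ.ker) * Nat.card ψ.ker :=
    Subgroup.card_eq_card_quotient_mul_card_subgroup _
  have h2 : Nat.card (Kˣ ⧸ ψ.ker) = Nat.card ψ.range :=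
    Nat.card_congr (QuotientGroup.quotientKerEquivRange ψ).toEquiv
  rw [← Nat.card_eq_fintype_card, h1, h2]

end Aux

/-- Fix k₁, k₂ ≥ 2. There is C > 0 (depending only on k₁, k₂) such that for every
odd prime ℓ, | |𝒞_ℓ| − ℓ⁶/λ₁ | ≤ C·ℓ⁵, where λ₁ = gcd(ℓ − 1, k₁ − 1, k₂ − 1) and
𝒞_ℓ = {(A,B) ∈ 𝒜_ℓ : tr A = tr B}. -/
theorem stmt_6 (k₁ k₂ : ℕ) (hk₁ : 2 ≤ k₁) (hk₂ : 2 ≤ k₂) :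
    ∃ C : ℝ, 0 < C ∧ ∀ ℓ : ℕ, ℓ.Prime → ℓ ≠ 2 →
      |(Nat.card {p : Matrix.GeneralLinearGroup (Fin 2) (ZMod ℓ) ×
            Matrix.GeneralLinearGroup (Fin 2) (ZMod ℓ) //
          (∃ v : (ZMod ℓ)ˣ,
            (p.1 : Matrix (Fin 2) (Fin 2) (ZMod ℓ)).det = (v : ZMod ℓ) ^ (k₁ - 1) ∧
            (p.2 : Matrix (Fin 2) (Fin 2) (ZMod ℓ)).det = (v : ZMod ℓ) ^ (k₂ - 1)) ∧
          Matrix.trace (p.1 : Matrix (Fin 2) (Fin 2) (ZMod ℓ)) =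
            Matrix.trace (p.2 : Matrix (Fin 2) (Fin 2) (ZMod ℓ))} : ℝ) -
        (ℓ : ℝ) ^ 6 / (Nat.gcd (ℓ - 1) (Nat.gcd (k₁ - 1) (k₂ - 1)) : ℝ)| ≤
      C * (ℓ : ℝ) ^ 5 := by
  classical
  refine ⟨3, by norm_num, ?_⟩
  intro ℓ hℓ hℓ2
  haveI : Fact (Nat.Prime ℓ) := ⟨hℓ⟩
  set K := ZMod ℓ with hK
  have hℓ3 : 3 ≤ ℓ := by
    have := hℓ.two_le
    omega
  have hcardK : Fintype.card K = ℓ := ZMod.card ℓ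
  have hcardKu : Fintype.card Kˣ = ℓ - 1 := by
    rw [Fintype.card_units, hcardK]
  have ha : 1 ≤ k₁ - 1 := by omega
  have hb : 1 ≤ k₂ - 1 := by omega
  set lam := Nat.gcd (ℓ - 1) (Nat.gcd (k₁ - 1) (k₂ - 1)) with hlam
  have hlampos : 0 < lam := Nat.gcd_pos_of_pos_left _ (by omega)
  -- the ambient predicate and finset
  set P : (Matrix.GeneralLinearGroup (Fin 2) K × Matrix.GeneralLinearGroup (Fin 2) K) → Prop :=
    fun p => (∃ v : Kˣ,
      (p.1 : Matrix (Fin 2) (Fin 2) K).det = (v : K) ^ (k₁ - 1) ∧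
      (p.2 : Matrix (Fin 2) (Fin 2) K).det = (v : K) ^ (k₂ - 1)) ∧
      Matrix.trace (p.1 : Matrix (Fin 2) (Fin 2) K) =
        Matrix.trace (p.2 : Matrix (Fin 2) (Fin 2) K) with hP
  set S : Finset _ := univ.filter P with hS
  have hcard : Nat.card {p // P p} = S.card := by
    rw [Nat.card_eq_fintype_card, Fintype.card_subtype]
  set Dfin : Finset (K × K) :=
    univ.image (fun v : Kˣ => ((v : K) ^ (k₁ - 1), (v : K) ^ (k₂ - 1))) with hD
  set f : (Matrix.GeneralLinearGroup (Fin 2) K × Matrix.GeneralLinearGroup (Fin 2) K)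
      → (K × K) × K :=
    fun p => (((p.1 : Matrix (Fin 2) (Fin 2) K).det, (p.2 : Matrix (Fin 2) (Fin 2) K).det),
      Matrix.trace (p.1 : Matrix (Fin 2) (Fin 2) K)) with hf
  have hfib : ∀ p ∈ S, f p ∈ Dfin ×ˢ univ := by
    intro p hp
    rw [hS, mem_filter] at hp
    obtain ⟨v, hv1, hv2⟩ := hp.2.1
    rw [Finset.mem_product]
    refine ⟨Finset.mem_image.mpr ⟨v, mem_univ v, ?_⟩, mem_univ _⟩
    simp only [hf]
    rw [hv1, hv2]
  have hsum := Finset.card_eq_sum_card_fiberwise hfib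
  -- each fiber is a product of two trace-det counts
  have hfiber_eq : ∀ w ∈ Dfin ×ˢ (univ : Finset K),
      (S.filter fun p => f p = w) =
        (univ.filter fun g : Matrix.GeneralLinearGroup (Fin 2) K =>
          Matrix.trace (g : Matrix (Fin 2) (Fin 2) K) = w.2 ∧
          (g : Matrix (Fin 2) (Fin 2) K).det = w.1.1) ×ˢ
        (univ.filter fun g : Matrix.GeneralLinearGroup (Fin 2) K =>
          Matrix.trace (g : Matrix (Fin 2) (Fin 2) K) = w.2 ∧
          (g : Matrix (Fin 2) (Fin 2) K).det = w.1.2) := by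
    intro w hw
    obtain ⟨⟨d₁, d₂⟩, t⟩ := w
    rw [Finset.mem_product] at hw
    obtain ⟨v, -, hv⟩ := Finset.mem_image.mp hw.1
    obtain ⟨hv1, hv2⟩ : (v : K) ^ (k₁ - 1) = d₁ ∧ (v : K) ^ (k₂ - 1) = d₂ := by
      simpa [Prod.ext_iff] using hv
    ext p
    simp only [hS, Finset.mem_product, Finset.mem_filter, mem_univ, true_and]
    constructor
    · rintro ⟨⟨-, htr⟩, hfp⟩
      simp only [hf, Prod.mk.injEq] at hfp
      obtain ⟨⟨h11, h12⟩, h2⟩ := hfp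
      exact ⟨⟨h2, h11⟩, ⟨htr ▸ h2, h12⟩⟩
    · rintro ⟨⟨ht1, hd1⟩, ht2, hd2⟩
      refine ⟨⟨⟨v, ?_, ?_⟩, ?_⟩, ?_⟩
      · rw [hd1, ← hv1]
      · rw [hd2, ← hv2]
      · rw [ht1, ht2]
      · simp only [hf, Prod.mk.injEq]
        exact ⟨⟨hd1, hd2⟩, ht1⟩
  -- bounds for each fiber
  have hDne : ∀ w ∈ Dfin ×ˢ (univ : Finset K), w.1.1 ≠ 0 ∧ w.1.2 ≠ 0 := by
    intro w hw
    obtain ⟨⟨d₁, d₂⟩, t⟩ := w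
    rw [Finset.mem_product] at hw
    obtain ⟨v, -, hv⟩ := Finset.mem_image.mp hw.1
    rw [Prod.mk.injEq] at hv
    obtain ⟨hv1, hv2⟩ : (v : K) ^ (k₁ - 1) = d₁ ∧ (v : K) ^ (k₂ - 1) = d₂ := by
      simpa [Prod.ext_iff] using hv
    exact ⟨hv1 ▸ pow_ne_zero _ (Units.ne_zero v), hv2 ▸ pow_ne_zero _ (Units.ne_zero v)⟩
  have hfiber_bounds : ∀ w ∈ Dfin ×ˢ (univ : Finset K),
      ℓ * (ℓ - 1) * (ℓ * (ℓ - 1)) ≤ (S.filter fun p => f p = w).card ∧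
      (S.filter fun p => f p = w).card ≤ (ℓ * (ℓ - 1) + 2 * ℓ) * (ℓ * (ℓ - 1) + 2 * ℓ) := by
    intro w hw
    obtain ⟨hne1, hne2⟩ := hDne w hw
    rw [hfiber_eq w hw, Finset.card_product]
    have c1 := count_gl_bounds (K := K) w.2 w.1.1 hne1
    have c2 := count_gl_bounds (K := K) w.2 w.1.2 hne2
    rw [Fintype.card_subtype, hcardK] at c1 c2
    exact ⟨Nat.mul_le_mul c1.1 c2.1, Nat.mul_le_mul c1.2 c2.2⟩
  -- global bounds
  have hcardProd : (Dfin ×ˢ (univ : Finset K)).card = Dfin.card * ℓ := by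
    rw [Finset.card_product, Finset.card_univ, hcardK]
  have hlow : Dfin.card * ℓ * (ℓ * (ℓ - 1) * (ℓ * (ℓ - 1))) ≤ S.card := by
    rw [hsum, ← hcardProd]
    calc (Dfin ×ˢ (univ : Finset K)).card * (ℓ * (ℓ - 1) * (ℓ * (ℓ - 1)))
        = ∑ _w ∈ Dfin ×ˢ (univ : Finset K), (ℓ * (ℓ - 1) * (ℓ * (ℓ - 1))) := by
          rw [Finset.sum_const, smul_eq_mul]
      _ ≤ ∑ w ∈ Dfin ×ˢ (univ : Finset K), (S.filter fun p => f p = w).card :=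
          Finset.sum_le_sum fun w hw => (hfiber_bounds w hw).1
  have hhigh : S.card ≤ Dfin.card * ℓ * ((ℓ * (ℓ - 1) + 2 * ℓ) * (ℓ * (ℓ - 1) + 2 * ℓ)) := by
    rw [hsum, ← hcardProd]
    calc ∑ w ∈ Dfin ×ˢ (univ : Finset K), (S.filter fun p => f p = w).card
        ≤ ∑ _w ∈ Dfin ×ˢ (univ : Finset K), ((ℓ * (ℓ - 1) + 2 * ℓ) * (ℓ * (ℓ - 1) + 2 * ℓ)) :=
          Finset.sum_le_sum fun w hw => (hfiber_bounds w hw).2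
      _ = _ := by rw [Finset.sum_const, smul_eq_mul]
  -- the image cardinality
  have himg : Dfin.card * lam = ℓ - 1 := by
    have := card_image_pow (K := K) (k₁ - 1) (k₂ - 1) ha
    rw [hcardKu] at this
    rw [hlam]
    exact this
  -- multiply bounds by lam
  have hA : ℓ * (ℓ - 1) * (ℓ * (ℓ - 1)) * ((ℓ - 1) * ℓ) ≤ S.card * lam := by
    calc ℓ * (ℓ - 1) * (ℓ * (ℓ - 1)) * ((ℓ - 1) * ℓ)
        = Dfin.card * ℓ * (ℓ * (ℓ - 1) * (ℓ * (ℓ - 1))) * lam := by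
          rw [← himg]; ring
      _ ≤ S.card * lam := Nat.mul_le_mul_right _ hlow
  have hB : S.card * lam ≤ (ℓ * (ℓ - 1) + 2 * ℓ) * (ℓ * (ℓ - 1) + 2 * ℓ) * ((ℓ - 1) * ℓ) := by
    calc S.card * lam
        ≤ Dfin.card * ℓ * ((ℓ * (ℓ - 1) + 2 * ℓ) * (ℓ * (ℓ - 1) + 2 * ℓ)) * lam :=
          Nat.mul_le_mul_right _ hhigh
      _ = (ℓ * (ℓ - 1) + 2 * ℓ) * (ℓ * (ℓ - 1) + 2 * ℓ) * ((ℓ - 1) * ℓ) := by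
          rw [← himg]; ring
  -- pass to the reals
  have hNcard : (Nat.card {p // P p} : ℝ) = (S.card : ℝ) := by rw [hcard]
  rw [hP] at hNcard
  rw [hNcard]
  have h1l : (1 : ℕ) ≤ ℓ
  · omega
  have hA' : ((ℓ : ℝ) * (ℓ - 1) * (ℓ * (ℓ - 1))) * ((ℓ - 1) * ℓ) ≤ (S.card : ℝ) * lam := by
    have := (Nat.cast_le (α := ℝ)).mpr hA
    push_cast [Nat.cast_sub h1l] at this
    linarith
  have hB' : (S.card : ℝ) * lam ≤
      ((ℓ : ℝ) * (ℓ - 1) + 2 * ℓ) * ((ℓ : ℝ) * (ℓ - 1) + 2 * ℓ) * (((ℓ : ℝ) - 1) * ℓ) := by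
    have := (Nat.cast_le (α := ℝ)).mpr hB
    push_cast [Nat.cast_sub h1l] at this
    linarith
  have hlamR : (0 : ℝ) < (lam : ℝ) := by exact_mod_cast hlampos
  have hlam1 : (1 : ℝ) ≤ (lam : ℝ) := by exact_mod_cast hlampos
  have hlR : (3 : ℝ) ≤ (ℓ : ℝ) := by exact_mod_cast hℓ3
  have hxnn : (0 : ℝ) ≤ (S.card : ℝ) := Nat.cast_nonneg _
  generalize hg1 : ((S.card : ℕ) : ℝ) = x at hA' hB' hxnn ⊢
  generalize hg2 : ((lam : ℕ) : ℝ) = y at hA' hB' hlamR hlam1 ⊢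
  clear hA hB hsum hfib hfiber_eq hDne hfiber_bounds hcardProd hlow hhigh himg hcard hNcard
    hg1 hg2 hcardK hcardKu hlampos hlam
  clear hS S hf f hD Dfin hP P lam
  set L : ℝ := (ℓ : ℝ) with hL
  rw [abs_le]
  have hprod : 0 ≤ 3 * L ^ 5 * (y - 1) := by
    have h5 : (0:ℝ) ≤ 3 * L ^ 5 := by positivity
    nlinarith
  constructor
  · rw [neg_le, neg_sub]
    have key : L ^ 6 / y ≤ x + 3 * L ^ 5 := by
      rw [div_le_iff₀ hlamR]
      nlinarith [hA', hprod]
    linarith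
  · have key : x - 3 * L ^ 5 ≤ L ^ 6 / y := by
      rw [le_div_iff₀ hlamR]
      nlinarith [hB', hprod]
    linarith
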